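/- Let U ⊆ ℝ² be open with coordinates (t, r) and r > 0 on U, and let h₁t, h₁r, h₂, ζ_t, ζ_r, ζ_e : U → ℝ be continuously differentiable. Define the gauge-transformed fields h₁t^Y = h₁t + ζ_t/r + ∂_t ζ_e, h₁r^Y = h₁r + ζ_r/r + ∂_r ζ_e − ζ_e/r, h₂^Y = h₂ + (2/r) ζ_e. Then the variables Y_t := r·h₁t − (r²/2) ∂_t h₂ and Y_r := r·h₁r − (r²/2) ∂_r h₂ transform as Y_t^Y = Y_t + ζ_t and Y_r^Y = Y_r + ζ_r, where Y_A^Y is built from the transformed fields by the same formula. -/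

import Mathlib

/-- Partial derivative with respect to the first coordinate `t`. -/
noncomputable def pdt (g : ℝ → ℝ → ℝ) : ℝ → ℝ → ℝ := fun t r => deriv (fun s => g s r) t

/-- Partial derivative with respect to the second coordinate `r`. -/
noncomputable def pdr (g : ℝ → ℝ → ℝ) : ℝ → ℝ → ℝ := fun t r => deriv (fun s => g t s) r

lemma diffAt_t {U : Set (ℝ × ℝ)} (hU : IsOpen U) {f : ℝ → ℝ → ℝ}
    (hf : ContDiffOn ℝ 1 (fun p : ℝ × ℝ => f p.1 p.2) U) {t r : ℝ} (hp : (t, r) ∈ U) :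
    DifferentiableAt ℝ (fun s => f s r) t := by
  have h := (hf.differentiableOn one_ne_zero).differentiableAt (hU.mem_nhds hp)
  exact h.comp t (differentiableAt_id.prodMk (differentiableAt_const r) : DifferentiableAt ℝ (fun s : ℝ => (s, r)) t)

lemma diffAt_r {U : Set (ℝ × ℝ)} (hU : IsOpen U) {f : ℝ → ℝ → ℝ}
    (hf : ContDiffOn ℝ 1 (fun p : ℝ × ℝ => f p.1 p.2) U) {t r : ℝ} (hp : (t, r) ∈ U) :
    DifferentiableAt ℝ (fun s => f t s) r := by
  have h := (hf.differentiableOn one_ne_zero).differentiableAt (hU.mem_nhds hp)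
  exact h.comp r ((differentiableAt_const t).prodMk differentiableAt_id)

/-- Transformation rule of the even-parity gauge-variant part
`Y_A := r h₁A − (r²/2) ∂_A h₂`: under the second-kind gauge transformation
`h₁t ↦ h₁t + ζ_t/r + ∂_t ζ_e`, `h₁r ↦ h₁r + ζ_r/r + ∂_r ζ_e − ζ_e/r`,
`h₂ ↦ h₂ + (2/r) ζ_e`, one has `Y_t ↦ Y_t + ζ_t` and `Y_r ↦ Y_r + ζ_r` on `U`. -/
theorem stmt_7 (U : Set (ℝ × ℝ)) (hU : IsOpen U) (hrpos : ∀ p ∈ U, 0 < p.2)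
    (h1t h1r h2 ζt ζr ζe : ℝ → ℝ → ℝ)
    (hh1t : ContDiffOn ℝ 1 (fun p : ℝ × ℝ => h1t p.1 p.2) U)
    (hh1r : ContDiffOn ℝ 1 (fun p : ℝ × ℝ => h1r p.1 p.2) U)
    (hh2 : ContDiffOn ℝ 1 (fun p : ℝ × ℝ => h2 p.1 p.2) U)
    (hζt : ContDiffOn ℝ 1 (fun p : ℝ × ℝ => ζt p.1 p.2) U)
    (hζr : ContDiffOn ℝ 1 (fun p : ℝ × ℝ => ζr p.1 p.2) U)
    (hζe : ContDiffOn ℝ 1 (fun p : ℝ × ℝ => ζe p.1 p.2) U)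
    (h1tY h1rY h2Y : ℝ → ℝ → ℝ)
    (hh1tY : ∀ t r, h1tY t r = h1t t r + ζt t r / r + pdt ζe t r)
    (hh1rY : ∀ t r, h1rY t r = h1r t r + ζr t r / r + pdr ζe t r - ζe t r / r)
    (hh2Y : ∀ t r, h2Y t r = h2 t r + 2 / r * ζe t r) :
    ∀ t r, (t, r) ∈ U →
      (r * h1tY t r - r ^ 2 / 2 * pdt h2Y t r
          = (r * h1t t r - r ^ 2 / 2 * pdt h2 t r) + ζt t r ∧
       r * h1rY t r - r ^ 2 / 2 * pdr h2Y t r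
          = (r * h1r t r - r ^ 2 / 2 * pdr h2 t r) + ζr t r) := by
  intro t r hp
  have hr : (0 : ℝ) < r := hrpos (t, r) hp
  have hrne : r ≠ 0 := ne_of_gt hr
  have dh2t : DifferentiableAt ℝ (fun s => h2 s r) t := diffAt_t hU hh2 hp
  have dζet : DifferentiableAt ℝ (fun s => ζe s r) t := diffAt_t hU hζe hp
  have dh2r : DifferentiableAt ℝ (fun s => h2 t s) r := diffAt_r hU hh2 hp
  have dζer : DifferentiableAt ℝ (fun s => ζe t s) r := diffAt_r hU hζe hp
  have dinv : DifferentiableAt ℝ (fun s : ℝ => 2 / s) r := by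
    exact ((differentiableAt_const (2:ℝ)).div differentiableAt_id hrne)
  -- pdt h2Y
  have ht : pdt h2Y t r = pdt h2 t r + 2 / r * pdt ζe t r := by
    have : (fun s => h2Y s r) = fun s => h2 s r + 2 / r * ζe s r := by
      funext s; exact hh2Y s r
    simp only [pdt, this]
    rw [deriv_fun_add dh2t (dζet.const_mul _), deriv_const_mul _ dζet]
  -- pdr h2Y
  have hrr : pdr h2Y t r = pdr h2 t r + (-(2 / r ^ 2) * ζe t r + 2 / r * pdr ζe t r) := by
    have : (fun s => h2Y t s) = fun s => h2 t s + (2 / s) * ζe t s := by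
      funext s; exact hh2Y t s
    simp only [pdr, this]
    rw [deriv_fun_add (g := fun s => 2 / s * ζe t s) dh2r (dinv.mul dζer), deriv_fun_mul dinv dζer]
    have : deriv (fun s : ℝ => 2 / s) r = -(2 / r ^ 2) := by
      have := deriv_div (c := fun _ : ℝ => (2:ℝ)) (d := fun s : ℝ => s)
        (differentiableAt_const 2) differentiableAt_id hrne
      rw [show -(2/r^2) = -2/r^2 by ring]; simpa using this
    rw [this]
  rw [hh1tY, hh1rY, ht, hrr]
  constructor <;> · field_simp; ring
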